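/- arXiv:2604.17469 — 2 statements merged into one kernel-verified Lean document; each statement's English description precedes it below -/
import Mathlib

section
/- Strong law of large numbers for order statistics with shifts: if h(x_1,...,x_k) = x_1^{p_1}···x_k^{p_k} is a monomial and φ: [0,1] → ℝ is differentiable with bounded derivative, then (1/N)·Σ_{i=0}^{N-k} Θ_{i+1,N}^{p_1}···Θ_{i+k,N}^{p_k} φ(i/N) → ∫_0^1 ρ(x)^{p_1+···+p_k} φ(x) dx almost surely, where ρ(x) = θ_L + (θ_R-θ_L)x. -/
open MeasureTheory ProbabilityTheory Finset Filter
open Topology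

/-- Lipschitz bound for powers. -/
lemma aux_pow_lip {A a b : ℝ} (hA : 1 ≤ A) (ha : |a| ≤ A) (hb : |b| ≤ A) (p : ℕ) :
    |a ^ p - b ^ p| ≤ p * A ^ p * |a - b| := by
  induction p with
  | zero => simp
  | succ n ih =>
    have key : a ^ (n+1) - b ^ (n+1) = a ^ n * (a - b) + b * (a ^ n - b ^ n) := by ring
    have h1 : |a ^ (n+1) - b ^ (n+1)| ≤ |a| ^ n * |a - b| + |b| * |a ^ n - b ^ n| := by
      rw [key]
      refine (abs_add_le _ _).trans ?_
      rw [abs_mul, abs_mul, abs_pow]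
    have hAn : |a| ^ n ≤ A ^ n := pow_le_pow_left₀ (abs_nonneg a) ha n
    have hAn' : A ^ n ≤ A ^ (n+1) := pow_le_pow_right₀ hA (by omega)
    have hA0 : (0:ℝ) ≤ A := le_trans zero_le_one hA
    have h2 : |b| * |a ^ n - b ^ n| ≤ A * (n * A ^ n * |a - b|) :=
      mul_le_mul hb ih (abs_nonneg _) hA0
    have h2' : A * (↑n * A ^ n * |a - b|) = ↑n * A ^ (n+1) * |a - b| := by
      rw [pow_succ]; ring
    have h3 : |a| ^ n * |a - b| ≤ A ^ n * |a - b| :=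
      mul_le_mul_of_nonneg_right hAn (abs_nonneg _)
    have h5 : A ^ n * |a - b| ≤ A ^ (n+1) * |a - b| :=
      mul_le_mul_of_nonneg_right hAn' (abs_nonneg _)
    push_cast
    nlinarith [abs_nonneg (a - b)]

/-- Lipschitz bound for products of bounded factors. -/
lemma aux_prod_lip {A : ℝ} (hA : 1 ≤ A) (k : ℕ) (a b : ℕ → ℝ)
    (haA : ∀ j < k, |a j| ≤ A) (hbA : ∀ j < k, |b j| ≤ A) :
    |∏ j ∈ range k, a j - ∏ j ∈ range k, b j| ≤ A ^ k * ∑ j ∈ range k, |a j - b j| := by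
  induction k with
  | zero => simp
  | succ n ih =>
    have ih' := ih (fun j hj => haA j (by omega)) (fun j hj => hbA j (by omega))
    have hA0 : (0:ℝ) ≤ A := le_trans zero_le_one hA
    have hbprod : |∏ j ∈ range n, b j| ≤ A ^ n := by
      rw [abs_prod]
      calc ∏ j ∈ range n, |b j| ≤ ∏ j ∈ range n, A :=
            Finset.prod_le_prod (fun j _ => abs_nonneg _)
              (fun j hj => hbA j (by simp at hj; omega))
        _ = A ^ n := by simp
    rw [Finset.prod_range_succ, Finset.prod_range_succ, Finset.sum_range_succ]
    have key : (∏ j ∈ range n, a j) * a n - (∏ j ∈ range n, b j) * b n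
        = (∏ j ∈ range n, a j - ∏ j ∈ range n, b j) * a n
          + (∏ j ∈ range n, b j) * (a n - b n) := by ring
    have h1 : |(∏ j ∈ range n, a j) * a n - (∏ j ∈ range n, b j) * b n|
        ≤ |∏ j ∈ range n, a j - ∏ j ∈ range n, b j| * |a n|
          + |∏ j ∈ range n, b j| * |a n - b n| := by
      rw [key]; refine (abs_add_le _ _).trans ?_; rw [abs_mul, abs_mul]
    have hAn : A ^ n ≤ A ^ (n+1) := pow_le_pow_right₀ hA (by omega)
    have han : |a n| ≤ A := haA n (by omega)
    have hsum0 : (0:ℝ) ≤ ∑ j ∈ range n, |a j - b j| :=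
      Finset.sum_nonneg fun j _ => abs_nonneg _
    have h2 : |∏ j ∈ range n, a j - ∏ j ∈ range n, b j| * |a n|
        ≤ (A ^ n * ∑ j ∈ range n, |a j - b j|) * A :=
      mul_le_mul ih' han (abs_nonneg _) (by positivity)
    have h2' : (A ^ n * ∑ j ∈ range n, |a j - b j|) * A
        = A ^ (n+1) * ∑ j ∈ range n, |a j - b j| := by rw [pow_succ]; ring
    have h3 : |∏ j ∈ range n, b j| * |a n - b n| ≤ A ^ n * |a n - b n| :=
      mul_le_mul_of_nonneg_right hbprod (abs_nonneg _)
    have h4 : A ^ n * |a n - b n| ≤ A ^ (n+1) * |a n - b n| :=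
      mul_le_mul_of_nonneg_right hAn (abs_nonneg _)
    have hgoal : A ^ (n+1) * (∑ j ∈ range n, |a j - b j| + |a n - b n|)
        = A ^ (n+1) * ∑ j ∈ range n, |a j - b j| + A ^ (n+1) * |a n - b n| := by ring
    linarith

/-- Riemann sums of a continuous function converge to the integral. -/
lemma aux_riemann {g : ℝ → ℝ} (hg : Continuous g) :
    Tendsto (fun N : ℕ => (1 / (N:ℝ)) * ∑ i ∈ range N, g ((i : ℝ) / N)) atTop
      (𝓝 (∫ x in (0:ℝ)..1, g x)) := by
  rw [Metric.tendsto_atTop]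
  intro ε hε
  have huc : UniformContinuousOn g (Set.Icc (-1 : ℝ) 2) :=
    isCompact_Icc.uniformContinuousOn_of_continuous hg.continuousOn
  rw [Metric.uniformContinuousOn_iff] at huc
  obtain ⟨δ, hδ, hδ'⟩ := huc (ε/2) (by linarith)
  obtain ⟨N₀, hN₀⟩ := exists_nat_gt (1/δ)
  refine ⟨max N₀ 1, fun N hN => ?_⟩
  have hN1 : 1 ≤ N := le_trans (le_max_right _ _) hN
  have hNpos : (0:ℝ) < N := by exact_mod_cast hN1
  have hNδ : 1 / (N:ℝ) < δ := by
    rw [div_lt_iff₀ hNpos]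
    have h : (N₀ : ℝ) ≤ N := by exact_mod_cast le_trans (le_max_left _ _) hN
    have h2 : (1/δ) * δ = 1 := by field_simp
    nlinarith
  set a : ℕ → ℝ := fun i => (i : ℝ) / N with ha
  have hmem : ∀ i : ℕ, i ≤ N → a i ∈ Set.Icc (-1:ℝ) 2 := by
    intro i hi
    constructor
    · have : (0:ℝ) ≤ (i:ℝ)/N := by positivity
      linarith
    · have h1 : (i:ℝ) ≤ N := by exact_mod_cast hi
      have : (i:ℝ)/N ≤ 1 := by rw [div_le_one hNpos]; exact h1
      linarith
  have hle : ∀ i : ℕ, a i ≤ a (i+1) := by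
    intro i
    have h : (i:ℝ) ≤ ((i+1:ℕ):ℝ) := by push_cast; linarith
    simp only [ha]
    gcongr
  have hint : ∀ m, IntervalIntegrable g volume (a m) (a (m+1)) :=
    fun m => hg.intervalIntegrable _ _
  have hsplit : ∑ i ∈ range N, ∫ x in a i..a (i+1), g x = ∫ x in (a 0)..(a N), g x :=
    intervalIntegral.sum_integral_adjacent_intervals (fun m _ => hint m)
  have ha0 : a 0 = 0 := by simp [ha]
  have haN : a N = 1 := by simp only [ha]; field_simp
  have hI : ∫ x in (0:ℝ)..1, g x = ∑ i ∈ range N, ∫ x in a i..a (i+1), g x := by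
    rw [hsplit, ha0, haN]
  have hstep : ∀ i : ℕ, a (i+1) - a i = 1 / N := by
    intro i; simp only [ha]; push_cast; field_simp; ring
  have hS : (1 / (N:ℝ)) * ∑ i ∈ range N, g ((i : ℝ) / N)
      = ∑ i ∈ range N, ∫ _x in a i..a (i+1), g (a i) := by
    rw [Finset.mul_sum]
    refine Finset.sum_congr rfl fun i _ => ?_
    rw [intervalIntegral.integral_const, hstep i, smul_eq_mul]
  rw [Real.dist_eq, hS, hI, ← Finset.sum_sub_distrib]
  have hterm : ∀ i ∈ range N,
      |(∫ _x in a i..a (i+1), g (a i)) - ∫ x in a i..a (i+1), g x| ≤ (ε/2) * (1/N) := by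
    intro i hi
    rw [Finset.mem_range] at hi
    rw [← intervalIntegral.integral_sub (intervalIntegrable_const) (hint i)]
    have := intervalIntegral.norm_integral_le_of_norm_le_const
      (f := fun x => g (a i) - g x) (a := a i) (b := a (i+1)) (C := ε/2) ?_
    · rw [Real.norm_eq_abs] at this
      refine this.trans ?_
      rw [abs_of_nonneg (by linarith [hstep i, hle i] : (0:ℝ) ≤ a (i+1) - a i), hstep i]
    · intro x hx
      rw [Set.uIoc_of_le (hle i)] at hx
      have hx1 : a i ≤ x := le_of_lt hx.1
      have hx2 : x ≤ a (i+1) := hx.2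
      have hxmem : x ∈ Set.Icc (-1:ℝ) 2 := by
        have h1 := (hmem i (by omega)).1
        have h2 := (hmem (i+1) (by omega)).2
        exact ⟨by linarith, by linarith⟩
      have hdist : dist (a i) x < δ := by
        rw [Real.dist_eq, abs_of_nonpos (by linarith)]
        have : x - a i ≤ 1/N := by linarith [hstep i]
        linarith
      have := hδ' (a i) (hmem i (by omega)) x hxmem hdist
      rw [Real.dist_eq] at this
      rw [Real.norm_eq_abs]
      exact le_of_lt this
  calc |∑ i ∈ range N, ((∫ _x in a i..a (i+1), g (a i)) - ∫ x in a i..a (i+1), g x)|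
      ≤ ∑ i ∈ range N, |(∫ _x in a i..a (i+1), g (a i)) - ∫ x in a i..a (i+1), g x| :=
        Finset.abs_sum_le_sum_abs _ _
    _ ≤ ∑ _i ∈ range N, (ε/2) * (1/N) := Finset.sum_le_sum hterm
    _ = N * ((ε/2) * (1/N)) := by rw [Finset.sum_const, Finset.card_range, nsmul_eq_mul]
    _ = ε/2 := by field_simp
    _ < ε := by linarith

/-- For a nondecreasing list of values, `v i ≤ t` iff at least `i` values are `≤ t`. -/
lemma aux_orderstat_le_iff {N i : ℕ} (hi1 : 1 ≤ i) (hiN : i ≤ N) (v : ℕ → ℝ)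
    (hmono : ∀ ⦃a b : ℕ⦄, 1 ≤ a → a ≤ b → b ≤ N → v a ≤ v b) (t : ℝ) :
    v i ≤ t ↔ i ≤ ((Finset.Icc 1 N).filter (fun j => v j ≤ t)).card := by
  constructor
  · intro h
    have hsub : Finset.Icc 1 i ⊆ (Finset.Icc 1 N).filter (fun j => v j ≤ t) := by
      intro j hj
      rw [Finset.mem_Icc] at hj
      rw [Finset.mem_filter, Finset.mem_Icc]
      exact ⟨⟨hj.1, le_trans hj.2 hiN⟩, le_trans (hmono hj.1 hj.2 hiN) h⟩
    have := Finset.card_le_card hsub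
    rwa [Nat.card_Icc, Nat.add_sub_cancel] at this
  · intro h
    by_contra hlt
    push_neg at hlt
    have hsub : (Finset.Icc 1 N).filter (fun j => v j ≤ t) ⊆ Finset.Icc 1 (i-1) := by
      intro j hj
      rw [Finset.mem_filter, Finset.mem_Icc] at hj
      rw [Finset.mem_Icc]
      refine ⟨hj.1.1, ?_⟩
      by_contra hji
      push_neg at hji
      have hij : i ≤ j := by omega
      exact absurd (le_trans (hmono hi1 hij hj.1.2) hj.2) (not_le.mpr hlt)
    have := Finset.card_le_card hsub
    rw [Nat.card_Icc] at this
    omega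

/-- Counting via a permutation of the index set. -/
lemma aux_card_perm {N : ℕ} (v u : ℕ → ℝ) (σ : ℕ → ℕ)
    (hσ : Set.BijOn σ (Set.Icc 1 N) (Set.Icc 1 N))
    (hv : ∀ i ∈ Set.Icc 1 N, v i = u (σ i)) (t : ℝ) :
    ((Finset.Icc 1 N).filter (fun j => v j ≤ t)).card
      = ((Finset.Icc 1 N).filter (fun j => u j ≤ t)).card := by
  apply Finset.card_bij (fun j _ => σ j)
  · intro j hj
    rw [Finset.mem_filter, Finset.mem_Icc] at hj
    have hjs : j ∈ Set.Icc 1 N := Set.mem_Icc.mpr ⟨hj.1.1, hj.1.2⟩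
    have hσj := hσ.mapsTo hjs
    rw [Set.mem_Icc] at hσj
    rw [Finset.mem_filter, Finset.mem_Icc]
    exact ⟨⟨hσj.1, hσj.2⟩, by rw [← hv j hjs]; exact hj.2⟩
  · intro j1 hj1 j2 hj2 heq
    rw [Finset.mem_filter, Finset.mem_Icc] at hj1 hj2
    exact hσ.injOn (Set.mem_Icc.mpr ⟨hj1.1.1, hj1.1.2⟩) (Set.mem_Icc.mpr ⟨hj2.1.1, hj2.1.2⟩) heq
  · intro b hb
    rw [Finset.mem_filter, Finset.mem_Icc] at hb
    obtain ⟨a, ha, hab⟩ := hσ.surjOn (Set.mem_Icc.mpr ⟨hb.1.1, hb.1.2⟩)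
    have haI := Set.mem_Icc.mp ha
    refine ⟨a, ?_, hab⟩
    rw [Finset.mem_filter, Finset.mem_Icc]
    exact ⟨⟨haI.1, haI.2⟩, by rw [hv a ha, hab]; exact hb.2⟩

lemma aux_slln_count {Ω : Type*} [MeasureSpace Ω] [IsProbabilityMeasure (ℙ : Measure Ω)]
    (U : ℕ → Ω → ℝ) (hUmeas : ∀ i, Measurable (U i))
    (hUiid : iIndepFun U ℙ)
    (hUlaw : ∀ i, Measure.map (U i) ℙ = volume.restrict (Set.Icc (0:ℝ) 1))
    {t : ℝ} (ht0 : 0 ≤ t) (ht1 : t ≤ 1) :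
    ∀ᵐ ω ∂ℙ, Tendsto (fun N : ℕ =>
      (((Finset.Icc 1 N).filter (fun j => U j ω ≤ t)).card : ℝ) / N) atTop (𝓝 t) := by
  set f : ℝ → ℝ := Set.indicator (Set.Iic t) (fun _ => (1:ℝ)) with hfdef
  have hf : Measurable f := measurable_const.indicator measurableSet_Iic
  set X : ℕ → Ω → ℝ := fun i ω => f (U (i+1) ω) with hXdef
  have hXmeas : ∀ i, Measurable (X i) := fun i => hf.comp (hUmeas (i+1))
  have hint : Integrable (X 0) ℙ := by
    refine (integrable_const (1:ℝ)).mono' (hXmeas 0).aestronglyMeasurable ?_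
    filter_upwards with ω
    rw [Real.norm_eq_abs]
    simp only [hXdef, hfdef, Set.indicator_apply, Set.mem_Iic]
    split <;> norm_num
  have hindep : Pairwise (fun i j => IndepFun (X i) (X j) ℙ) := by
    intro i j hij
    exact (hUiid.indepFun (show i+1 ≠ j+1 by omega)).comp hf hf
  have hident : ∀ i, IdentDistrib (X i) (X 0) ℙ ℙ := by
    intro i
    have hU : IdentDistrib (U (i+1)) (U 1) ℙ ℙ :=
      ⟨(hUmeas _).aemeasurable, (hUmeas _).aemeasurable, by rw [hUlaw, hUlaw]⟩
    exact hU.comp hf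
  have hmean : (ℙ[X 0] : ℝ) = t := by
    have h1 : ℙ[X 0] = ∫ x, f x ∂(Measure.map (U 1) ℙ) :=
      (integral_map (hUmeas 1).aemeasurable hf.aestronglyMeasurable).symm
    rw [h1, hUlaw 1, hfdef]
    rw [integral_indicator_const (1:ℝ) measurableSet_Iic]
    rw [measureReal_def, Measure.restrict_apply measurableSet_Iic]
    have : Set.Iic t ∩ Set.Icc 0 1 = Set.Icc 0 t := by
      ext x
      simp only [Set.mem_inter_iff, Set.mem_Iic, Set.mem_Icc]
      constructor
      · rintro ⟨h1, h2, h3⟩; exact ⟨h2, h1⟩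
      · rintro ⟨h1, h2⟩; exact ⟨h2, h1, le_trans h2 ht1⟩
    rw [this, Real.volume_Icc, smul_eq_mul, mul_one, ENNReal.toReal_ofReal (by linarith), sub_zero]
  have := strong_law_ae_real X hint hindep hident
  rw [hmean] at this
  filter_upwards [this] with ω hω
  refine hω.congr fun N => ?_
  congr 1
  have h1 : ∑ i ∈ range N, X i ω = ∑ i ∈ range N, (if U (i+1) ω ≤ t then (1:ℝ) else 0) := by
    refine Finset.sum_congr rfl fun i _ => ?_
    simp [hXdef, hfdef, Set.indicator_apply, Set.mem_Iic]
  have h2 : ∑ j ∈ Finset.Icc 1 N, (if U j ω ≤ t then (1:ℝ) else 0)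
      = ∑ i ∈ range N, (if U (i+1) ω ≤ t then (1:ℝ) else 0) := by
    rw [← Finset.Ico_add_one_right_eq_Icc, Finset.sum_Ico_eq_sum_range]
    simp only [Nat.add_sub_cancel]
    exact Finset.sum_congr rfl fun i _ => by rw [Nat.add_comm 1 i]
  rw [h1, ← h2, Finset.sum_boole]

lemma aux_close (U' : ℕ → ℝ) (V : ℕ → ℕ → ℝ)
    (h1 : ∀ j, U' j ∈ Set.Icc (0:ℝ) 1)
    (hmono : ∀ N ⦃i j : ℕ⦄, 1 ≤ i → i ≤ j → j ≤ N → V N i ≤ V N j)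
    (hperm : ∀ N, ∃ σ : ℕ → ℕ, Set.BijOn σ (Set.Icc 1 N) (Set.Icc 1 N) ∧
      ∀ i ∈ Set.Icc 1 N, V N i = U' (σ i))
    (h2 : ∀ m r : ℕ, r ≤ m+1 → Tendsto (fun N : ℕ =>
        (((Finset.Icc 1 N).filter (fun j => U' j ≤ (r:ℝ)/((m:ℝ)+1))).card : ℝ) / N)
        atTop (𝓝 ((r:ℝ)/((m:ℝ)+1))))
    {ε : ℝ} (hε : 0 < ε) :
    ∀ᶠ N in atTop, ∀ i, 1 ≤ i → i ≤ N → |V N i - (i:ℝ)/N| ≤ ε := by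
  obtain ⟨m, hm⟩ := exists_nat_one_div_lt (show (0:ℝ) < ε/2 by linarith)
  set m' : ℝ := (m:ℝ) + 1 with hm'def
  have hm'pos : (0:ℝ) < m' := by positivity
  have hm'lt : 1/m' < ε/2 := hm
  set δ : ℝ := ε/4 with hδdef
  have hδpos : (0:ℝ) < δ := by positivity
  have hev : ∀ᶠ N in atTop, ∀ r ∈ Finset.range (m+2),
      |(((Finset.Icc 1 N).filter (fun j => U' j ≤ (r:ℝ)/m')).card : ℝ) / N - (r:ℝ)/m'| < δ := by
    rw [eventually_all_finset]
    intro r hr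
    rw [Finset.mem_range] at hr
    have := Metric.tendsto_nhds.mp (h2 m r (by omega)) δ hδpos
    filter_upwards [this] with N hN
    rwa [Real.dist_eq] at hN
  filter_upwards [hev, eventually_ge_atTop 1] with N hN hN1 i hi1 hiN
  have hNpos : (0:ℝ) < N := by exact_mod_cast lt_of_lt_of_le Nat.zero_lt_one hN1
  obtain ⟨σ, hσbij, hσeq⟩ := hperm N
  set x : ℝ := V N i with hxdef
  have hx01 : x ∈ Set.Icc (0:ℝ) 1 := by
    rw [hxdef, hσeq i (Set.mem_Icc.mpr ⟨hi1, hiN⟩)]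
    exact h1 _
  have hchar : ∀ t : ℝ, V N i ≤ t ↔
      i ≤ ((Finset.Icc 1 N).filter (fun j => U' j ≤ t)).card := by
    intro t
    rw [aux_orderstat_le_iff hi1 hiN (fun j => V N j) (hmono N) t]
    rw [aux_card_perm (fun j => V N j) U' σ hσbij hσeq t]
  set r : ℕ := ⌈m' * x⌉₊ with hrdef
  have hrm : r ≤ m + 1 := by
    rw [hrdef]
    apply Nat.ceil_le.mpr
    have : m' * x ≤ m' * 1 := by
      apply mul_le_mul_of_nonneg_left hx01.2 (le_of_lt hm'pos)
    push_cast
    linarith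
  have hxr : x ≤ (r:ℝ)/m' := by
    rw [le_div_iff₀ hm'pos]
    have := Nat.le_ceil (m' * x)
    linarith [this]
  have hrx : (r:ℝ) < m' * x + 1 := by
    rw [hrdef]
    exact Nat.ceil_lt_add_one (mul_nonneg (le_of_lt hm'pos) hx01.1)
  -- upper bound : i/N - x ≤ ε
  have hub : (i:ℝ)/N - x ≤ ε := by
    have hle : i ≤ ((Finset.Icc 1 N).filter (fun j => U' j ≤ (r:ℝ)/m')).card :=
      (hchar ((r:ℝ)/m')).mp hxr
    have hcr := hN r (Finset.mem_range.mpr (by omega))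
    have h3 : (i:ℝ) / N ≤
        (((Finset.Icc 1 N).filter (fun j => U' j ≤ (r:ℝ)/m')).card : ℝ) / N := by
      have hcast2 : (i:ℝ) ≤ (((Finset.Icc 1 N).filter (fun j => U' j ≤ (r:ℝ)/m')).card : ℝ) := by
        exact_mod_cast hle
      gcongr
    have h4 : (r:ℝ)/m' < x + 1/m' := by
      rw [div_lt_iff₀ hm'pos]
      have : (x + 1/m') * m' = m' * x + 1 := by field_simp
      rw [this]; exact hrx
    have h5 : (((Finset.Icc 1 N).filter (fun j => U' j ≤ (r:ℝ)/m')).card : ℝ) / N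
        < (r:ℝ)/m' + δ := by
      have := abs_lt.mp hcr
      linarith [this.2]
    linarith
  -- lower bound : x - i/N ≤ ε
  have hlb : x - (i:ℝ)/N ≤ ε := by
    rcases Nat.eq_zero_or_pos r with hr0 | hrpos
    · have : x ≤ 0 := by
        have := hxr
        rw [hr0] at this
        simpa using this
      have : x = 0 := le_antisymm this hx01.1
      have hiNpos : (0:ℝ) ≤ (i:ℝ)/N := by positivity
      linarith
    · have hr1 : (1:ℕ) ≤ r := hrpos
      have hcast : ((r - 1 : ℕ) : ℝ) = (r:ℝ) - 1 := by
        rw [Nat.cast_sub hr1]; simp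
      have hlt : ((r-1:ℕ):ℝ)/m' < x := by
        rw [div_lt_iff₀ hm'pos, hcast]
        linarith [hrx]
      have hnot : ¬ (V N i ≤ ((r-1:ℕ):ℝ)/m') := by
        rw [← hxdef]; linarith
      have hgt : ¬ (i ≤ ((Finset.Icc 1 N).filter (fun j => U' j ≤ ((r-1:ℕ):ℝ)/m')).card) :=
        fun h => hnot ((hchar _).mpr h)
      push_neg at hgt
      have hcount : ((((Finset.Icc 1 N).filter (fun j => U' j ≤ ((r-1:ℕ):ℝ)/m')).card : ℝ))
          ≤ (i:ℝ) - 1 := by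
        have : ((Finset.Icc 1 N).filter (fun j => U' j ≤ ((r-1:ℕ):ℝ)/m')).card ≤ i - 1 := by
          omega
        have h2' : (((Finset.Icc 1 N).filter (fun j => U' j ≤ ((r-1:ℕ):ℝ)/m')).card : ℝ)
            ≤ ((i-1:ℕ):ℝ) := by exact_mod_cast this
        rwa [Nat.cast_sub hi1, Nat.cast_one] at h2'
      have hcr := hN (r-1) (Finset.mem_range.mpr (by omega))
      have h6 : ((r-1:ℕ):ℝ)/m' <
          (((Finset.Icc 1 N).filter (fun j => U' j ≤ ((r-1:ℕ):ℝ)/m')).card : ℝ)/N + δ := by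
        have := abs_lt.mp hcr
        linarith [this.1]
      have h7 : (((Finset.Icc 1 N).filter (fun j => U' j ≤ ((r-1:ℕ):ℝ)/m')).card : ℝ)/N
          ≤ ((i:ℝ) - 1)/N := by gcongr
      have h8 : (r:ℝ)/m' = ((r-1:ℕ):ℝ)/m' + 1/m' := by
        rw [hcast]; field_simp; ring
      have h9 : ((i:ℝ)-1)/N ≤ (i:ℝ)/N := by gcongr <;> linarith
      linarith
  rw [abs_le]
  constructor <;> [linarith; linarith]

lemma aux_det (θL θR : ℝ) (hθL : 0 ≤ θL) (hθ : θL < θR)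
    (V : ℕ → ℕ → ℝ)
    (hV01 : ∀ N i, 1 ≤ i → i ≤ N → V N i ∈ Set.Icc (0:ℝ) 1)
    (hclose : ∀ ε : ℝ, 0 < ε → ∀ᶠ N in atTop, ∀ i, 1 ≤ i → i ≤ N → |V N i - (i:ℝ)/N| ≤ ε)
    (k : ℕ) (hk : 1 ≤ k) (p : ℕ → ℕ) (φ : ℝ → ℝ) (hφc : Continuous φ) :
    Tendsto (fun N : ℕ => (1/(N:ℝ)) * ∑ i ∈ Finset.range (N-k+1),
        (∏ j ∈ Finset.range k, (θL + (θR - θL) * V N (i+j+1)) ^ p j) * φ ((i:ℝ)/N))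
      atTop (𝓝 (∫ x in (0:ℝ)..1,
        (θL + (θR - θL) * x) ^ (∑ j ∈ Finset.range k, p j) * φ x)) := by
  have hθ' : (0:ℝ) < θR - θL := by linarith
  set P : ℕ := ∑ j ∈ Finset.range k, p j with hPdef
  set g : ℝ → ℝ := fun x => (θL + (θR - θL) * x) ^ P * φ x with hgdef
  have hρc : Continuous fun x : ℝ => θL + (θR - θL) * x := by continuity
  have hg : Continuous g := (hρc.pow P).mul hφc
  set B : ℝ := max 1 θR with hBdef
  have hB1 : (1:ℝ) ≤ B := le_max_left _ _
  have hB0 : (0:ℝ) ≤ B := by linarith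
  set A : ℝ := B ^ P with hAdef
  have hA1 : (1:ℝ) ≤ A := by
    calc (1:ℝ) = 1 ^ P := by simp
      _ ≤ B ^ P := pow_le_pow_left₀ zero_le_one hB1 P
  have hA0 : (0:ℝ) ≤ A := by linarith
  -- bound for φ on [0,1]
  obtain ⟨Cφ0, hCφ0⟩ := isCompact_Icc.exists_bound_of_continuousOn
    (s := Set.Icc (0:ℝ) 1) hφc.continuousOn
  set Cφ : ℝ := max Cφ0 0 with hCφdef
  have hCφpos : (0:ℝ) ≤ Cφ := le_max_right _ _
  have hCφ : ∀ y ∈ Set.Icc (0:ℝ) 1, |φ y| ≤ Cφ := fun y hy =>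
    le_trans (by rw [← Real.norm_eq_abs]; exact hCφ0 y hy) (le_max_left _ _)
  -- bound for g on [0,1]
  obtain ⟨Cg0, hCg0⟩ := isCompact_Icc.exists_bound_of_continuousOn
    (s := Set.Icc (0:ℝ) 1) hg.continuousOn
  set Cg : ℝ := max Cg0 0 with hCgdef
  have hCgpos : (0:ℝ) ≤ Cg := le_max_right _ _
  have hCg : ∀ y ∈ Set.Icc (0:ℝ) 1, |g y| ≤ Cg := fun y hy =>
    le_trans (by rw [← Real.norm_eq_abs]; exact hCg0 y hy) (le_max_left _ _)
  have hpow_le : ∀ j, j < k → p j ≤ P := fun j hj =>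
    Finset.single_le_sum (f := p) (fun i _ => Nat.zero_le _) (Finset.mem_range.mpr hj)
  -- membership facts
  have hρmem : ∀ x : ℝ, x ∈ Set.Icc (0:ℝ) 1 → |θL + (θR - θL) * x| ≤ B := by
    intro x hx
    rw [abs_of_nonneg (by nlinarith [hx.1])]
    have h2 : θL + (θR - θL) * x ≤ θR := by nlinarith [hx.2]
    exact le_trans h2 (le_max_right _ _)
  -- truncated Riemann sums converge
  have hRfull := aux_riemann hg
  have htrunc : Tendsto (fun N : ℕ => (1/(N:ℝ)) * ∑ i ∈ Finset.range (N-k+1), g ((i:ℝ)/N))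
      atTop (𝓝 (∫ x in (0:ℝ)..1, g x)) := by
    have hdiff : Tendsto (fun N : ℕ =>
        (1/(N:ℝ)) * ∑ i ∈ Finset.range (N-k+1), g ((i:ℝ)/N)
          - (1/(N:ℝ)) * ∑ i ∈ Finset.range N, g ((i:ℝ)/N)) atTop (𝓝 0) := by
      apply squeeze_zero_norm' (a := fun N : ℕ => ((k:ℝ) * Cg)/N)
      · filter_upwards [eventually_ge_atTop 1] with N hN1
        have hNpos : (0:ℝ) < N := by exact_mod_cast hN1
        have hsub : Finset.range (N-k+1) ⊆ Finset.range N := by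
          apply Finset.range_subset_range.mpr; omega
        rw [← mul_sub]
        have hssub : ∑ i ∈ Finset.range (N-k+1), g ((i:ℝ)/N)
            - ∑ i ∈ Finset.range N, g ((i:ℝ)/N)
            = -∑ i ∈ Finset.range N \ Finset.range (N-k+1), g ((i:ℝ)/N) := by
          rw [Finset.sum_sdiff_eq_sub hsub]; ring
        rw [hssub, Real.norm_eq_abs, abs_mul, abs_neg,
          abs_of_pos (show (0:ℝ) < 1/N by positivity)]
        have hcard : ((Finset.range N \ Finset.range (N-k+1)).card : ℝ) ≤ (k:ℝ) := by
          have : (Finset.range N \ Finset.range (N-k+1)).card ≤ k := by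
            rw [Finset.card_sdiff_of_subset hsub, Finset.card_range, Finset.card_range]; omega
          exact_mod_cast this
        have hboundS : |∑ i ∈ Finset.range N \ Finset.range (N-k+1), g ((i:ℝ)/N)|
            ≤ (k:ℝ) * Cg := by
          calc |∑ i ∈ Finset.range N \ Finset.range (N-k+1), g ((i:ℝ)/N)|
              ≤ ∑ i ∈ Finset.range N \ Finset.range (N-k+1), |g ((i:ℝ)/N)| :=
                Finset.abs_sum_le_sum_abs _ _
            _ ≤ ∑ _i ∈ Finset.range N \ Finset.range (N-k+1), Cg := by
                refine Finset.sum_le_sum (fun i hi => hCg _ ⟨by positivity, ?_⟩)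
                have hiN : i < N := Finset.mem_range.mp (Finset.mem_sdiff.mp hi).1
                rw [div_le_one hNpos]
                exact_mod_cast le_of_lt hiN
            _ = ((Finset.range N \ Finset.range (N-k+1)).card : ℝ) * Cg := by
                rw [Finset.sum_const, nsmul_eq_mul]
            _ ≤ (k:ℝ) * Cg := mul_le_mul_of_nonneg_right hcard hCgpos
        calc (1/(N:ℝ)) * |∑ i ∈ Finset.range N \ Finset.range (N-k+1), g ((i:ℝ)/N)|
            ≤ (1/(N:ℝ)) * ((k:ℝ) * Cg) := mul_le_mul_of_nonneg_left hboundS (by positivity)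
          _ = ((k:ℝ) * Cg)/N := by ring
      · exact tendsto_const_div_atTop_nhds_zero_nat _
    have := hdiff.add hRfull
    simpa using this
  -- main difference estimate
  have hSR : Tendsto (fun N : ℕ =>
      ((1/(N:ℝ)) * ∑ i ∈ Finset.range (N-k+1),
        (∏ j ∈ Finset.range k, (θL + (θR - θL) * V N (i+j+1)) ^ p j) * φ ((i:ℝ)/N))
      - (1/(N:ℝ)) * ∑ i ∈ Finset.range (N-k+1), g ((i:ℝ)/N)) atTop (𝓝 0) := by
    rw [NormedAddCommGroup.tendsto_nhds_zero]
    intro ε hε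
    obtain ⟨K, hKdef⟩ : ∃ K : ℝ, K = Cφ * A^k * ((k:ℝ) * ((P:ℝ) * A * (θR - θL))) + 1 :=
      ⟨_, rfl⟩
    have hK1 : (1:ℝ) ≤ K := by
      rw [hKdef]
      have h0 : (0:ℝ) ≤ Cφ * A^k * ((k:ℝ) * ((P:ℝ) * A * (θR - θL))) := by
        apply mul_nonneg (mul_nonneg hCφpos (pow_nonneg hA0 k))
        apply mul_nonneg (Nat.cast_nonneg k)
        apply mul_nonneg (mul_nonneg (Nat.cast_nonneg P) hA0) (le_of_lt hθ')
      linarith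
    have hKpos : (0:ℝ) < K := by linarith
    obtain ⟨η, hηdef⟩ : ∃ η : ℝ, η = ε/(4*K) := ⟨_, rfl⟩
    have hηpos : (0:ℝ) < η := by rw [hηdef]; positivity
    have hkN0 := Metric.tendsto_nhds.mp (tendsto_const_div_atTop_nhds_zero_nat (k:ℝ)) η hηpos
    filter_upwards [hclose η hηpos, eventually_ge_atTop (k+1), hkN0] with N hcl hNk hkN
    have hNk' : k ≤ N := by omega
    have hNpos : (0:ℝ) < N := by exact_mod_cast (by omega : 0 < N)
    have hkNle : (k:ℝ)/N ≤ η := by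
      rw [Real.dist_eq, sub_zero, abs_of_nonneg (by positivity)] at hkN
      linarith
    have hterm : ∀ i ∈ Finset.range (N-k+1),
        |(∏ j ∈ Finset.range k, (θL + (θR - θL) * V N (i+j+1)) ^ p j) * φ ((i:ℝ)/N)
          - g ((i:ℝ)/N)| ≤ (K-1) * (2*η) := by
      intro i hi
      rw [Finset.mem_range] at hi
      have hik : i + k ≤ N := by omega
      have hiN01 : (i:ℝ)/N ∈ Set.Icc (0:ℝ) 1 := by
        constructor
        · positivity
        · rw [div_le_one hNpos]; exact_mod_cast (by omega : i ≤ N)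
      have hgsplit : g ((i:ℝ)/N)
          = (∏ j ∈ Finset.range k, (θL + (θR - θL) * ((i:ℝ)/N)) ^ p j) * φ ((i:ℝ)/N) := by
        rw [hgdef, Finset.prod_pow_eq_pow_sum]
      rw [hgsplit, ← sub_mul, abs_mul]
      have hjfact : ∀ j, j < k →
          |(θL + (θR - θL) * V N (i+j+1)) ^ p j - (θL + (θR - θL) * ((i:ℝ)/N)) ^ p j|
            ≤ (P:ℝ) * A * ((θR - θL) * (2*η)) := by
        intro j hj
        have hu01 : V N (i+j+1) ∈ Set.Icc (0:ℝ) 1 := hV01 N (i+j+1) (by omega) (by omega)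
        have hρu : |θL + (θR - θL) * V N (i+j+1)| ≤ B := hρmem _ hu01
        have hρv : |θL + (θR - θL) * ((i:ℝ)/N)| ≤ B := hρmem _ hiN01
        have hpow := aux_pow_lip hB1 hρu hρv (p j)
        have habs : |(θL + (θR - θL) * V N (i+j+1)) - (θL + (θR - θL) * ((i:ℝ)/N))|
            = (θR - θL) * |V N (i+j+1) - (i:ℝ)/N| := by
          have h : (θL + (θR - θL) * V N (i+j+1)) - (θL + (θR - θL) * ((i:ℝ)/N))
              = (θR - θL) * (V N (i+j+1) - (i:ℝ)/N) := by ring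
          rw [h, abs_mul, abs_of_pos hθ']
        have hdist : |V N (i+j+1) - (i:ℝ)/N| ≤ 2*η := by
          have h1 := hcl (i+j+1) (by omega) (by omega)
          have h2 : |((i+j+1:ℕ):ℝ)/N - (i:ℝ)/N| ≤ (k:ℝ)/N := by
            push_cast
            have h3 : ((i:ℝ)+j+1)/N - (i:ℝ)/N = ((j:ℝ)+1)/N := by ring
            rw [h3, abs_of_nonneg (by positivity)]
            gcongr
            exact_mod_cast (by omega : j + 1 ≤ k)
          calc |V N (i+j+1) - (i:ℝ)/N|
              ≤ |V N (i+j+1) - ((i+j+1:ℕ):ℝ)/N| + |((i+j+1:ℕ):ℝ)/N - (i:ℝ)/N| :=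
                abs_sub_le _ _ _
            _ ≤ η + (k:ℝ)/N := add_le_add h1 h2
            _ ≤ η + η := by linarith
            _ = 2*η := by ring
        have hpj : ((p j : ℕ):ℝ) ≤ (P:ℝ) := by exact_mod_cast hpow_le j hj
        have hBpj : B ^ p j ≤ A := by
          rw [hAdef]; exact pow_le_pow_right₀ hB1 (hpow_le j hj)
        calc |(θL + (θR - θL) * V N (i+j+1)) ^ p j - (θL + (θR - θL) * ((i:ℝ)/N)) ^ p j|
            ≤ (p j : ℝ) * B ^ p j * |(θL + (θR - θL) * V N (i+j+1))
                - (θL + (θR - θL) * ((i:ℝ)/N))| := hpow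
          _ = (p j : ℝ) * B ^ p j * ((θR - θL) * |V N (i+j+1) - (i:ℝ)/N|) := by rw [habs]
          _ ≤ (P:ℝ) * A * ((θR - θL) * (2*η)) := by
              have m1 : (p j : ℝ) * B ^ p j ≤ (P:ℝ) * A :=
                mul_le_mul hpj hBpj (pow_nonneg hB0 _) (Nat.cast_nonneg P)
              have m2 : (θR - θL) * |V N (i+j+1) - (i:ℝ)/N| ≤ (θR - θL) * (2*η) :=
                mul_le_mul_of_nonneg_left hdist (le_of_lt hθ')
              exact mul_le_mul m1 m2 (mul_nonneg (le_of_lt hθ') (abs_nonneg _))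
                (mul_nonneg (Nat.cast_nonneg P) hA0)
      have hprod := aux_prod_lip hA1 k
        (fun j => (θL + (θR - θL) * V N (i+j+1)) ^ p j)
        (fun j => (θL + (θR - θL) * ((i:ℝ)/N)) ^ p j)
        (fun j hj => by
          rw [abs_pow]
          calc |θL + (θR - θL) * V N (i+j+1)| ^ p j
              ≤ B ^ p j := pow_le_pow_left₀ (abs_nonneg _) (hρmem _ (hV01 N (i+j+1) (by omega) (by omega))) _
            _ ≤ A := by rw [hAdef]; exact pow_le_pow_right₀ hB1 (hpow_le j hj))
        (fun j hj => by
          rw [abs_pow]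
          calc |θL + (θR - θL) * ((i:ℝ)/N)| ^ p j
              ≤ B ^ p j := pow_le_pow_left₀ (abs_nonneg _) (hρmem _ hiN01) _
            _ ≤ A := by rw [hAdef]; exact pow_le_pow_right₀ hB1 (hpow_le j hj))
      have hsumb : ∑ j ∈ Finset.range k,
          |(θL + (θR - θL) * V N (i+j+1)) ^ p j - (θL + (θR - θL) * ((i:ℝ)/N)) ^ p j|
            ≤ (k:ℝ) * ((P:ℝ) * A * ((θR - θL) * (2*η))) := by
        calc _ ≤ ∑ _j ∈ Finset.range k, (P:ℝ) * A * ((θR - θL) * (2*η)) :=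
              Finset.sum_le_sum (fun j hj => hjfact j (Finset.mem_range.mp hj))
          _ = (k:ℝ) * ((P:ℝ) * A * ((θR - θL) * (2*η))) := by
              rw [Finset.sum_const, Finset.card_range, nsmul_eq_mul]
      have hφb : |φ ((i:ℝ)/N)| ≤ Cφ := hCφ _ hiN01
      calc |∏ j ∈ Finset.range k, (θL + (θR - θL) * V N (i+j+1)) ^ p j
            - ∏ j ∈ Finset.range k, (θL + (θR - θL) * ((i:ℝ)/N)) ^ p j| * |φ ((i:ℝ)/N)|
          ≤ (A^k * ((k:ℝ) * ((P:ℝ) * A * ((θR - θL) * (2*η))))) * Cφ := by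
            have hleft := hprod.trans
              (mul_le_mul_of_nonneg_left hsumb (pow_nonneg hA0 k))
            exact mul_le_mul hleft hφb (abs_nonneg _) (le_trans (abs_nonneg _) hleft)
        _ = (K-1) * (2*η) := by rw [hKdef]; ring
    -- sum the bound
    have hrw : ((1/(N:ℝ)) * ∑ i ∈ Finset.range (N-k+1),
        (∏ j ∈ Finset.range k, (θL + (θR - θL) * V N (i+j+1)) ^ p j) * φ ((i:ℝ)/N))
        - (1/(N:ℝ)) * ∑ i ∈ Finset.range (N-k+1), g ((i:ℝ)/N)
        = (1/(N:ℝ)) * ∑ i ∈ Finset.range (N-k+1),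
            ((∏ j ∈ Finset.range k, (θL + (θR - θL) * V N (i+j+1)) ^ p j) * φ ((i:ℝ)/N)
              - g ((i:ℝ)/N)) := by
      rw [← mul_sub, Finset.sum_sub_distrib]
    rw [hrw, Real.norm_eq_abs, abs_mul]
    have hb1 : |∑ i ∈ Finset.range (N-k+1),
        ((∏ j ∈ Finset.range k, (θL + (θR - θL) * V N (i+j+1)) ^ p j) * φ ((i:ℝ)/N)
          - g ((i:ℝ)/N))| ≤ ((N-k+1 : ℕ):ℝ) * ((K-1) * (2*η)) := by
      calc _ ≤ ∑ i ∈ Finset.range (N-k+1),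
            |(∏ j ∈ Finset.range k, (θL + (θR - θL) * V N (i+j+1)) ^ p j) * φ ((i:ℝ)/N)
              - g ((i:ℝ)/N)| := Finset.abs_sum_le_sum_abs _ _
        _ ≤ ∑ _i ∈ Finset.range (N-k+1), (K-1) * (2*η) := Finset.sum_le_sum hterm
        _ = ((N-k+1 : ℕ):ℝ) * ((K-1) * (2*η)) := by
            rw [Finset.sum_const, Finset.card_range, nsmul_eq_mul]
    have hcard : ((N-k+1 : ℕ):ℝ) ≤ (N:ℝ) := by exact_mod_cast (by omega : N-k+1 ≤ N)
    have habs1N : |1/(N:ℝ)| = 1/(N:ℝ) := abs_of_pos (by positivity)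
    rw [habs1N]
    have hKη : (0:ℝ) ≤ (K-1) * (2*η) := by
      apply mul_nonneg (by linarith) (by linarith)
    have hstep1 : (1/(N:ℝ)) * |∑ i ∈ Finset.range (N-k+1),
        ((∏ j ∈ Finset.range k, (θL + (θR - θL) * V N (i+j+1)) ^ p j) * φ ((i:ℝ)/N)
          - g ((i:ℝ)/N))| ≤ (1/(N:ℝ)) * (((N-k+1 : ℕ):ℝ) * ((K-1) * (2*η))) :=
      mul_le_mul_of_nonneg_left hb1 (by positivity)
    have hstep2 : (1/(N:ℝ)) * (((N-k+1 : ℕ):ℝ) * ((K-1) * (2*η)))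
        ≤ (1/(N:ℝ)) * ((N:ℝ) * ((K-1) * (2*η))) :=
      mul_le_mul_of_nonneg_left (mul_le_mul_of_nonneg_right hcard hKη) (by positivity)
    have hstep3 : (1/(N:ℝ)) * ((N:ℝ) * ((K-1) * (2*η))) = (K-1) * (2*η) := by
      field_simp
    have hstep4 : (K-1) * (2*η) ≤ K * (2*η) :=
      mul_le_mul_of_nonneg_right (sub_le_self K zero_le_one)
        (by linarith only [hηpos])
    have hK0 : K ≠ 0 := ne_of_gt hKpos
    have hstep5 : K * (2*η) = ε/2 := by rw [hηdef]; field_simp; ring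
    linarith only [hstep1, hstep2, hstep3, hstep4, hstep5, hε]
  have := hSR.add htrunc
  simpa using this

/-- Strong law of large numbers for shifted monomials of order
statistics: for a monomial `h(x_1,...,x_k) = x_1^{p_1}⋯x_k^{p_k}` and `φ`
differentiable with bounded derivative,
`(1/N) Σ_{i=0}^{N-k} Θ_{i+1,N}^{p_1}⋯Θ_{i+k,N}^{p_k} φ(i/N)
  → ∫_0^1 ρ(x)^{p_1+⋯+p_k} φ(x) dx` almost surely,
where `Θ_{i,N} = θ_L + (θ_R-θ_L)U_{i:N}` and `ρ(x) = θ_L + (θ_R-θ_L)x`. -/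
theorem slln_local_monomials_order_statistics
    {Ω : Type*} [MeasureSpace Ω] [IsProbabilityMeasure (ℙ : Measure Ω)]
    (θL θR : ℝ) (hθL : 0 ≤ θL) (hθ : θL < θR)
    (U : ℕ → Ω → ℝ)
    (hUmeas : ∀ i, Measurable (U i))
    (hUiid : iIndepFun U ℙ)
    (hUlaw : ∀ i, Measure.map (U i) ℙ = volume.restrict (Set.Icc (0:ℝ) 1))
    (Uord : ℕ → ℕ → Ω → ℝ)
    (hOmeas : ∀ N i, Measurable (Uord N i))
    (hmono : ∀ N ω ⦃i j : ℕ⦄, 1 ≤ i → i ≤ j → j ≤ N → Uord N i ω ≤ Uord N j ω)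
    (hperm : ∀ N ω, ∃ σ : ℕ → ℕ, Set.BijOn σ (Set.Icc 1 N) (Set.Icc 1 N) ∧
      ∀ i ∈ Set.Icc 1 N, Uord N i ω = U (σ i) ω)
    (k : ℕ) (hk : 1 ≤ k) (p : ℕ → ℕ)
    (φ : ℝ → ℝ) (hφ : Differentiable ℝ φ) (hφ' : ∃ M, ∀ y, |deriv φ y| ≤ M) :
    ∀ᵐ ω ∂ℙ, Tendsto
      (fun N : ℕ =>
        (1 / (N : ℝ)) * ∑ i ∈ Finset.range (N - k + 1),
          (∏ j ∈ Finset.range k, (θL + (θR - θL) * Uord N (i + j + 1) ω) ^ (p j)) *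
            φ ((i : ℝ) / N))
      atTop
      (nhds (∫ x in (0:ℝ)..1,
        (θL + (θR - θL) * x) ^ (∑ j ∈ Finset.range k, p j) * φ x)) := by
  have hφc : Continuous φ := hφ.continuous
  have hae1 : ∀ᵐ ω ∂ℙ, ∀ j, U j ω ∈ Set.Icc (0:ℝ) 1 := by
    rw [ae_all_iff]
    intro j
    have hmeas : MeasurableSet (Set.Icc (0:ℝ) 1)ᶜ := measurableSet_Icc.compl
    have h0 : ℙ (U j ⁻¹' (Set.Icc (0:ℝ) 1)ᶜ) = 0 := by
      rw [← Measure.map_apply (hUmeas j) hmeas, hUlaw j, Measure.restrict_apply hmeas,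
        Set.compl_inter_self]
      exact measure_empty
    rw [ae_iff]
    exact h0
  have hae2 : ∀ᵐ ω ∂ℙ, ∀ m r : ℕ, r ≤ m + 1 → Tendsto (fun N : ℕ =>
      (((Finset.Icc 1 N).filter (fun j => U j ω ≤ (r:ℝ)/((m:ℝ)+1))).card : ℝ) / N)
      atTop (𝓝 ((r:ℝ)/((m:ℝ)+1))) := by
    rw [ae_all_iff]
    intro m
    rw [ae_all_iff]
    intro r
    by_cases h : r ≤ m + 1
    · have ht0 : (0:ℝ) ≤ (r:ℝ)/((m:ℝ)+1) := by positivity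
      have ht1 : (r:ℝ)/((m:ℝ)+1) ≤ 1 := by
        rw [div_le_one (by positivity)]
        exact_mod_cast h
      filter_upwards [aux_slln_count U hUmeas hUiid hUlaw ht0 ht1] with ω hω _
      exact hω
    · exact ae_of_all _ (fun ω hr => absurd hr h)
  filter_upwards [hae1, hae2] with ω h1 h2
  have hV01 : ∀ N i, 1 ≤ i → i ≤ N → Uord N i ω ∈ Set.Icc (0:ℝ) 1 := by
    intro N i hi1 hiN
    obtain ⟨σ, hσ, heq⟩ := hperm N ω
    rw [heq i (Set.mem_Icc.mpr ⟨hi1, hiN⟩)]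
    exact h1 _
  have hclose : ∀ ε : ℝ, 0 < ε → ∀ᶠ N in atTop, ∀ i, 1 ≤ i → i ≤ N →
      |Uord N i ω - (i:ℝ)/N| ≤ ε := fun ε hε =>
    aux_close (fun j => U j ω) (fun N i => Uord N i ω) h1 (fun N => hmono N ω)
      (fun N => hperm N ω) h2 hε
  exact aux_det θL θR hθL hθ (fun N i => Uord N i ω) hV01 hclose k hk p φ hφc
end

section
/- Local equilibrium for moments: in the mixed product state μ_N, for fixed x ∈ (0,1), k ∈ ℕ, and nonnegative integers p_1,...,p_k, the joint moment E[∏_{j=1}^k η_{⌊xN⌋+j,N}^{p_j}] converges as N → ∞ to ∏_{j=1}^k (Σ_{l≥0} l^{p_j} (1/(1+ρ(x)))(ρ(x)/(1+ρ(x)))^l), i.e., the product of moments of a geometric distribution with mean ρ(x) = θ_L + (θ_R-θ_L)x. -/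
open MeasureTheory ProbabilityTheory Finset Filter

/-- The `p`-th moment of the geometric distribution with mean `θ`:
`Σ_{l≥0} l^p (1/(1+θ))(θ/(1+θ))^l`. -/
noncomputable def geomMoment (θ : ℝ) (p : ℕ) : ℝ :=
  ∑' l : ℕ, (l : ℝ) ^ p * ((1 / (1 + θ)) * (θ / (1 + θ)) ^ l)

lemma summable_geom_aux (p : ℕ) {r : ℝ} (h0 : 0 ≤ r) (h1 : r < 1) (c : ℝ) :
    Summable (fun l : ℕ => (l : ℝ) ^ p * (c * r ^ l)) := by
  have h := summable_pow_mul_geometric_of_norm_lt_one (R := ℝ) p (r := r)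
    (by rwa [Real.norm_eq_abs, abs_of_nonneg h0])
  exact (h.mul_left c).congr (fun l => by ring)

lemma geomMoment_summable (p : ℕ) {θ : ℝ} (h : 0 ≤ θ) :
    Summable (fun l : ℕ => (l : ℝ) ^ p * ((1 / (1 + θ)) * (θ / (1 + θ)) ^ l)) :=
  summable_geom_aux p (div_nonneg h (by linarith)) ((div_lt_one (by linarith)).mpr (by linarith)) _

lemma geomMoment_nonneg (p : ℕ) {θ : ℝ} (h : 0 ≤ θ) : 0 ≤ geomMoment θ p := by
  refine tsum_nonneg fun l => mul_nonneg (by positivity) (mul_nonneg ?_ (pow_nonneg ?_ l))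
  · exact one_div_nonneg.mpr (by linarith)
  · exact div_nonneg h (by linarith)

lemma geomMoment_le_bound {a b θ : ℝ} (ha : 0 ≤ a) (h1 : a ≤ θ) (h2 : θ ≤ b) (p : ℕ) :
    geomMoment θ p ≤ ∑' l : ℕ, (l : ℝ) ^ p * ((1 / (1 + a)) * (b / (1 + b)) ^ l) := by
  have h0θ : 0 ≤ θ := ha.trans h1
  have hb : 0 ≤ b := h0θ.trans h2
  rw [geomMoment]
  refine Summable.tsum_le_tsum (fun l => ?_) (geomMoment_summable p h0θ)
    (summable_geom_aux p (div_nonneg hb (by linarith)) ((div_lt_one (by linarith)).mpr (by linarith)) _)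
  refine mul_le_mul_of_nonneg_left ?_ (by positivity)
  refine mul_le_mul (one_div_le_one_div_of_le (by linarith) (by linarith))
    (pow_le_pow_left₀ (div_nonneg h0θ (by linarith)) ?_ l)
    (pow_nonneg (div_nonneg h0θ (by linarith)) l) (one_div_nonneg.mpr (by linarith))
  rw [div_le_div_iff₀ (by linarith) (by linarith)]
  nlinarith

lemma geomMoment_tendsto {a b : ℝ} (ha : 0 ≤ a) {u : ℕ → ℝ} {c : ℝ}
    (hu : ∀ᶠ n in atTop, u n ∈ Set.Icc a b) (hc : Tendsto u atTop (nhds c))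
    (hca : a ≤ c) (hcb : c ≤ b) (p : ℕ) :
    Tendsto (fun n => geomMoment (u n) p) atTop (nhds (geomMoment c p)) := by
  have hb : 0 ≤ b := (ha.trans hca).trans hcb
  simp only [geomMoment]
  apply tendsto_tsum_of_dominated_convergence
    (bound := fun l : ℕ => (l : ℝ) ^ p * ((1 / (1 + a)) * (b / (1 + b)) ^ l))
  · exact summable_geom_aux p (div_nonneg hb (by linarith)) ((div_lt_one (by linarith)).mpr (by linarith)) _
  · intro l
    have h1c : (1 : ℝ) + c ≠ 0 := by have : 0 ≤ c := ha.trans hca; linarith [this]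
    have hd : Tendsto (fun n => 1 + u n) atTop (nhds (1 + c)) := tendsto_const_nhds.add hc
    exact tendsto_const_nhds.mul ((tendsto_const_nhds.div hd h1c).mul ((hc.div hd h1c).pow l))
  · filter_upwards [hu] with n hn l
    obtain ⟨hna, hnb⟩ := hn
    have h0 : 0 ≤ u n := ha.trans hna
    have hpos : (0:ℝ) < 1 + u n := by linarith
    rw [Real.norm_eq_abs, abs_of_nonneg (mul_nonneg (by positivity)
      (mul_nonneg (one_div_nonneg.mpr hpos.le) (pow_nonneg (div_nonneg h0 hpos.le) l)))]
    refine mul_le_mul_of_nonneg_left ?_ (by positivity)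
    refine mul_le_mul (one_div_le_one_div_of_le (by linarith) (by linarith))
      (pow_le_pow_left₀ (div_nonneg h0 hpos.le) ?_ l)
      (pow_nonneg (div_nonneg h0 hpos.le) l) (one_div_nonneg.mpr (by linarith))
    rw [div_le_div_iff₀ (by linarith) (by linarith)]
    nlinarith

lemma count_le_iff {Ω : Type*} (U : ℕ → Ω → ℝ) (Uord : ℕ → ℕ → Ω → ℝ)
    (hmono : ∀ N ω ⦃i j : ℕ⦄, 1 ≤ i → i ≤ j → j ≤ N → Uord N i ω ≤ Uord N j ω)
    (hperm : ∀ N ω, ∃ σ : ℕ → ℕ, Set.BijOn σ (Set.Icc 1 N) (Set.Icc 1 N) ∧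
      ∀ i ∈ Set.Icc 1 N, Uord N i ω = U (σ i) ω)
    (N : ℕ) (ω : Ω) {i : ℕ} (hi1 : 1 ≤ i) (hiN : i ≤ N) (t : ℝ) :
    Uord N i ω ≤ t ↔ i ≤ ((Finset.Icc 1 N).filter (fun m => U m ω ≤ t)).card := by
  obtain ⟨σ, hbij, hσ⟩ := hperm N ω
  have hmemIcc : ∀ m : ℕ, m ∈ Finset.Icc 1 N ↔ m ∈ Set.Icc 1 N := by
    intro m; rw [Finset.mem_Icc, Set.mem_Icc]
  have hcard : ((Finset.Icc 1 N).filter fun j => Uord N j ω ≤ t).card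
      = ((Finset.Icc 1 N).filter fun m => U m ω ≤ t).card := by
    apply Finset.card_bij (fun j _ => σ j)
    · intro a ha
      rw [Finset.mem_filter] at ha ⊢
      have haI : a ∈ Set.Icc 1 N := (hmemIcc a).mp ha.1
      exact ⟨(hmemIcc _).mpr (hbij.mapsTo haI), by rw [← hσ a haI]; exact ha.2⟩
    · intro a₁ h₁ a₂ h₂ h
      exact hbij.injOn ((hmemIcc _).mp (Finset.mem_filter.mp h₁).1)
        ((hmemIcc _).mp (Finset.mem_filter.mp h₂).1) h
    · intro b hb
      rw [Finset.mem_filter] at hb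
      obtain ⟨a, haI, rfl⟩ := hbij.surjOn ((hmemIcc b).mp hb.1)
      exact ⟨a, Finset.mem_filter.mpr ⟨(hmemIcc a).mpr haI, by rw [hσ a haI]; exact hb.2⟩, rfl⟩
  rw [← hcard]
  constructor
  · intro h
    calc i = (Finset.Icc 1 i).card := by rw [Nat.card_Icc]; omega
    _ ≤ _ := Finset.card_le_card (fun j hj => by
        rw [Finset.mem_Icc] at hj
        rw [Finset.mem_filter, Finset.mem_Icc]
        exact ⟨⟨hj.1, hj.2.trans hiN⟩, le_trans (hmono N ω hj.1 hj.2 hiN) h⟩)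
  · intro h
    by_contra hcon
    push_neg at hcon
    have hsub : ((Finset.Icc 1 N).filter fun j => Uord N j ω ≤ t) ⊆ Finset.Icc 1 (i - 1) := by
      intro j hj
      rw [Finset.mem_filter, Finset.mem_Icc] at hj
      rw [Finset.mem_Icc]
      refine ⟨hj.1.1, ?_⟩
      by_contra hji
      push_neg at hji
      have hij : i ≤ j := by omega
      exact absurd (le_trans (hmono N ω hi1 hij hj.1.2) hj.2) (not_le.mpr hcon)
    have hcc := Finset.card_le_card hsub
    rw [Nat.card_Icc] at hcc
    omega

lemma slln_count {Ω : Type*} [MeasureSpace Ω] [IsProbabilityMeasure (ℙ : Measure Ω)]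
    (U : ℕ → Ω → ℝ) (hUmeas : ∀ i, Measurable (U i))
    (hUiid : iIndepFun U ℙ)
    (hUlaw : ∀ i, Measure.map (U i) ℙ = volume.restrict (Set.Icc (0:ℝ) 1))
    {t : ℝ} (ht0 : 0 ≤ t) (ht1 : t ≤ 1) :
    ∀ᵐ ω ∂ℙ, Tendsto
      (fun N : ℕ => (N : ℝ)⁻¹ * (((Finset.Icc 1 N).filter (fun m => U m ω ≤ t)).card : ℝ))
      atTop (nhds t) := by
  set g : ℝ → ℝ := (Set.Iic t).indicator (fun _ => 1) with hg_def
  have hg : Measurable g := measurable_const.indicator measurableSet_Iic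
  set X : ℕ → Ω → ℝ := fun i => g ∘ U (i + 1) with hX_def
  have hX0 : X 0 = (U 1 ⁻¹' Set.Iic t).indicator (fun _ => (1:ℝ)) := rfl
  have hint : Integrable (X 0) ℙ := by
    rw [hX0]; exact (integrable_const 1).indicator (hUmeas 1 measurableSet_Iic)
  have hindep : Pairwise (Function.onFun (IndepFun · · ℙ) X) := fun i j hij =>
    (hUiid.indepFun (show i + 1 ≠ j + 1 by omega)).comp hg hg
  have hident : ∀ i, IdentDistrib (X i) (X 0) ℙ ℙ := fun i =>
    (IdentDistrib.comp ⟨(hUmeas (i+1)).aemeasurable, (hUmeas 1).aemeasurable,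
      by rw [hUlaw, hUlaw]⟩ hg)
  have hmean : ℙ[X 0] = t := by
    rw [hX0, integral_indicator_const _ (hUmeas 1 measurableSet_Iic)]
    have h2 : ℙ (U 1 ⁻¹' Set.Iic t) = ENNReal.ofReal t := by
      rw [← Measure.map_apply (hUmeas 1) measurableSet_Iic, hUlaw,
        Measure.restrict_apply measurableSet_Iic]
      have hset : Set.Iic t ∩ Set.Icc (0:ℝ) 1 = Set.Icc 0 t := by
        ext y
        simp only [Set.mem_inter_iff, Set.mem_Iic, Set.mem_Icc]
        constructor
        · rintro ⟨h1, h2, h3⟩; exact ⟨h2, h1⟩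
        · rintro ⟨h1, h2⟩; exact ⟨h2, ⟨h1, h2.trans ht1⟩⟩
      rw [hset, Real.volume_Icc, sub_zero]
    rw [measureReal_def, h2]
    simp [ENNReal.toReal_ofReal ht0]
  filter_upwards [ProbabilityTheory.strong_law_ae X hint hindep hident] with ω hω
  rw [hmean] at hω
  have hsum : ∀ N : ℕ, ∑ i ∈ Finset.range N, X i ω
      = (((Finset.Icc 1 N).filter (fun m => U m ω ≤ t)).card : ℝ) := by
    intro N
    have h1 : ∀ i, X i ω = (if U (i+1) ω ≤ t then (1:ℝ) else 0) := by
      intro i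
      simp [hX_def, hg_def, Set.indicator_apply, Set.mem_Iic]
    calc ∑ i ∈ Finset.range N, X i ω
        = ∑ i ∈ Finset.range N, (if U (i+1) ω ≤ t then (1:ℝ) else 0) :=
          Finset.sum_congr rfl (fun i _ => h1 i)
      _ = (((Finset.range N).filter (fun i => U (i+1) ω ≤ t)).card : ℝ) := Finset.sum_boole _ _
      _ = (((Finset.Icc 1 N).filter (fun m => U m ω ≤ t)).card : ℝ) := by
          norm_cast
          apply Finset.card_bij (fun i _ => i + 1)
          · intro a ha
            rw [Finset.mem_filter, Finset.mem_range] at ha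
            rw [Finset.mem_filter, Finset.mem_Icc]
            exact ⟨⟨by omega, by omega⟩, ha.2⟩
          · intro a₁ h₁ a₂ h₂ h; omega
          · intro b hb
            rw [Finset.mem_filter, Finset.mem_Icc] at hb
            refine ⟨b - 1, ?_, by omega⟩
            rw [Finset.mem_filter, Finset.mem_range]
            have hb1 : b - 1 + 1 = b := by omega
            rw [hb1]
            exact ⟨by omega, hb.2⟩
  convert hω using 2 with N
  rw [hsum N, smul_eq_mul]

lemma floor_add_le {x : ℝ} (hx0 : 0 ≤ x) (hx1 : x < 1) (j : ℕ) :
    ∀ᶠ N : ℕ in atTop, Nat.floor (x * N) + j + 1 ≤ N := by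
  have h := tendsto_natCast_atTop_atTop (R := ℝ)
  filter_upwards [h.eventually_ge_atTop (((j : ℝ) + 1) / (1 - x))] with N hN
  have h1x : (0:ℝ) < 1 - x := by linarith
  rw [div_le_iff₀ h1x] at hN
  have h3 : (Nat.floor (x * N) : ℝ) ≤ x * N := Nat.floor_le (by positivity)
  have hfin : ((Nat.floor (x * N) + j + 1 : ℕ) : ℝ) ≤ (N : ℝ) := by push_cast; nlinarith
  exact_mod_cast hfin

lemma uord_tendsto_ae {Ω : Type*} [MeasureSpace Ω] [IsProbabilityMeasure (ℙ : Measure Ω)]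
    (U : ℕ → Ω → ℝ) (hUmeas : ∀ i, Measurable (U i))
    (hUiid : iIndepFun U ℙ)
    (hUlaw : ∀ i, Measure.map (U i) ℙ = volume.restrict (Set.Icc (0:ℝ) 1))
    (Uord : ℕ → ℕ → Ω → ℝ)
    (hmono : ∀ N ω ⦃i j : ℕ⦄, 1 ≤ i → i ≤ j → j ≤ N → Uord N i ω ≤ Uord N j ω)
    (hperm : ∀ N ω, ∃ σ : ℕ → ℕ, Set.BijOn σ (Set.Icc 1 N) (Set.Icc 1 N) ∧
      ∀ i ∈ Set.Icc 1 N, Uord N i ω = U (σ i) ω)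
    {x : ℝ} (hx0 : 0 < x) (hx1 : x < 1) :
    ∀ᵐ ω ∂ℙ, ∀ j : ℕ,
      Tendsto (fun N : ℕ => Uord N (Nat.floor (x * N) + j + 1) ω) atTop (nhds x) := by
  set ε : ℕ → ℝ := fun n => min x (1 - x) / (n + 2) with hε_def
  have hmin : 0 < min x (1 - x) := lt_min hx0 (by linarith)
  have hεpos : ∀ n, 0 < ε n := fun n => div_pos hmin (by positivity)
  have hεle : ∀ n, ε n ≤ min x (1 - x) := fun n =>
    div_le_self hmin.le (by have : (0:ℝ) ≤ (n:ℝ) := Nat.cast_nonneg n; linarith)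
  have hae : ∀ᵐ ω ∂ℙ, ∀ n : ℕ,
      (Tendsto (fun N : ℕ => (N : ℝ)⁻¹ *
        (((Finset.Icc 1 N).filter (fun m => U m ω ≤ x + ε n)).card : ℝ)) atTop (nhds (x + ε n)))
      ∧ (Tendsto (fun N : ℕ => (N : ℝ)⁻¹ *
        (((Finset.Icc 1 N).filter (fun m => U m ω ≤ x - ε n)).card : ℝ)) atTop (nhds (x - ε n))) := by
    rw [ae_all_iff]
    intro n
    have h1 := slln_count U hUmeas hUiid hUlaw
      (t := x + ε n) (by positivity) (by have := hεle n; have := min_le_right x (1-x); linarith)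
    have h2 := slln_count U hUmeas hUiid hUlaw
      (t := x - ε n) (by have := hεle n; have := min_le_left x (1-x); linarith) (by have := hεpos n; linarith)
    exact h1.and h2
  filter_upwards [hae] with ω hω j
  rw [Metric.tendsto_nhds]
  intro δ hδ
  -- choose n with ε n < δ
  obtain ⟨n, hn⟩ := exists_nat_gt (min x (1 - x) / δ)
  have hεδ : ε n < δ := by
    rw [hε_def]
    rw [div_lt_iff₀ hδ] at hn
    have hn2 : (0:ℝ) < (n:ℝ) + 2 := by positivity
    rw [div_lt_iff₀ hn2]
    nlinarith
  obtain ⟨hplus, hminus⟩ := hω n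
  have e1 := floor_add_le hx0.le hx1 j
  have e2 : ∀ᶠ N : ℕ in atTop, x + ε n / 2 ≤ (N : ℝ)⁻¹ *
      (((Finset.Icc 1 N).filter (fun m => U m ω ≤ x + ε n)).card : ℝ) :=
    hplus.eventually_const_le (by have := hεpos n; linarith)
  have e3 : ∀ᶠ N : ℕ in atTop, (N : ℝ)⁻¹ *
      (((Finset.Icc 1 N).filter (fun m => U m ω ≤ x - ε n)).card : ℝ) ≤ x - ε n / 2 :=
    hminus.eventually_le_const (by have := hεpos n; linarith)
  have e4 : ∀ᶠ N : ℕ in atTop, (j : ℝ) + 2 ≤ (N : ℝ) * (ε n / 2) :=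
    ((tendsto_natCast_atTop_atTop (R := ℝ)).atTop_mul_const
      (by have := hεpos n; linarith)).eventually_ge_atTop _
  have e5 : ∀ᶠ N : ℕ in atTop, 1 ≤ N := eventually_ge_atTop 1
  filter_upwards [e1, e2, e3, e4, e5] with N h1 h2 h3 h4 h5
  have hNpos : (0:ℝ) < (N : ℝ) := by exact_mod_cast h5
  set i : ℕ := Nat.floor (x * N) + j + 1 with hi_def
  have hi1 : 1 ≤ i := by omega
  have hfl : (Nat.floor (x * N) : ℝ) ≤ x * N := Nat.floor_le (by positivity)
  have hfl2 : x * N < (Nat.floor (x * N) : ℝ) + 1 := Nat.lt_floor_add_one _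
  -- upper bound
  have hcplus : i ≤ ((Finset.Icc 1 N).filter (fun m => U m ω ≤ x + ε n)).card := by
    have hr : ((i : ℕ) : ℝ) ≤
        (((Finset.Icc 1 N).filter (fun m => U m ω ≤ x + ε n)).card : ℝ) := by
      rw [inv_mul_eq_div, le_div_iff₀ hNpos] at h2
      push_cast [hi_def]
      nlinarith
    exact_mod_cast hr
  have hle : Uord N i ω ≤ x + ε n :=
    (count_le_iff U Uord hmono hperm N ω hi1 h1 _).mpr hcplus
  -- lower bound
  have hcminus : ((Finset.Icc 1 N).filter (fun m => U m ω ≤ x - ε n)).card < i := by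
    have hr : (((Finset.Icc 1 N).filter (fun m => U m ω ≤ x - ε n)).card : ℝ) < (i : ℝ) := by
      rw [inv_mul_eq_div, div_le_iff₀ hNpos] at h3
      have hNε : 0 < (N : ℝ) * (ε n / 2) := mul_pos hNpos (by have := hεpos n; linarith)
      push_cast [hi_def]
      nlinarith
    exact_mod_cast hr
  have hgt : x - ε n < Uord N i ω := by
    by_contra hcon
    push_neg at hcon
    have := (count_le_iff U Uord hmono hperm N ω hi1 h1 _).mp hcon
    omega
  rw [Real.dist_eq, abs_lt]
  constructor <;> nlinarith [hεδ, hεpos n]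

/-- Local equilibrium for moments.  In the mixed product state `μ_N`
(geometric coordinates `η_{i,N}` which, conditionally on the order-statistics
parameters `Θ_{i,N} = θ_L + (θ_R-θ_L)U_{i:N}`, are independent geometrics with
means `Θ_{i,N}`), for fixed `x ∈ (0,1)` and nonnegative integers `p_1,...,p_k`,
`E[∏_{j=1}^k η_{⌊xN⌋+j,N}^{p_j}] → ∏_{j=1}^k Σ_{l≥0} l^{p_j} (1/(1+ρ(x)))(ρ(x)/(1+ρ(x)))^l`
as `N → ∞`, where `ρ(x) = θ_L + (θ_R-θ_L)x`. -/
theorem local_equilibrium_moments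
    {Ω : Type*} [MeasureSpace Ω] [IsProbabilityMeasure (ℙ : Measure Ω)]
    (θL θR : ℝ) (hθL : 0 ≤ θL) (hθ : θL < θR)
    (U : ℕ → Ω → ℝ)
    (hUmeas : ∀ i, Measurable (U i))
    (hUiid : iIndepFun U ℙ)
    (hUlaw : ∀ i, Measure.map (U i) ℙ = volume.restrict (Set.Icc (0:ℝ) 1))
    (Uord : ℕ → ℕ → Ω → ℝ)
    (hOmeas : ∀ N i, Measurable (Uord N i))
    (hmono : ∀ N ω ⦃i j : ℕ⦄, 1 ≤ i → i ≤ j → j ≤ N → Uord N i ω ≤ Uord N j ω)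
    (hperm : ∀ N ω, ∃ σ : ℕ → ℕ, Set.BijOn σ (Set.Icc 1 N) (Set.Icc 1 N) ∧
      ∀ i ∈ Set.Icc 1 N, Uord N i ω = U (σ i) ω)
    (η : ℕ → ℕ → Ω → ℕ)
    (hηmeas : ∀ N i, Measurable (η N i))
    -- conditionally on the random parameters, the coordinates are independent
    -- geometrics: conditional joint moments factorize through `geomMoment`
    (hcond : ∀ (N m : ℕ) (s q : ℕ → ℕ), Function.Injective s →
      (ℙ[(fun ω => ∏ j ∈ Finset.range m, ((η N (s j) ω : ℝ)) ^ (q j)) |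
          MeasurableSpace.comap (fun ω (i : ℕ) => Uord N i ω) MeasurableSpace.pi])
        =ᵐ[ℙ] fun ω => ∏ j ∈ Finset.range m,
          geomMoment (θL + (θR - θL) * Uord N (s j) ω) (q j))
    (x : ℝ) (hx : x ∈ Set.Ioo (0:ℝ) 1) (k : ℕ) (p : ℕ → ℕ) :
    Tendsto
      (fun N : ℕ =>
        ∫ ω, ∏ j ∈ Finset.range k, ((η N (Nat.floor (x * N) + j + 1) ω : ℝ)) ^ (p j) ∂ℙ)
      atTop
      (nhds (∏ j ∈ Finset.range k,
        ∑' l : ℕ, (l : ℝ) ^ (p j) *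
          ((1 / (1 + (θL + (θR - θL) * x))) *
            ((θL + (θR - θL) * x) / (1 + (θL + (θR - θL) * x))) ^ l))) := by
  obtain ⟨hx0, hx1⟩ := hx
  set ρ : ℝ := θL + (θR - θL) * x with hρ_def
  have hρL : θL ≤ ρ := by nlinarith
  have hρR : ρ ≤ θR := by nlinarith
  -- sub-σ-algebras
  have hm : ∀ N : ℕ,
      MeasurableSpace.comap (fun ω (i : ℕ) => Uord N i ω) MeasurableSpace.pi ≤
        (inferInstance : MeasurableSpace Ω) := fun N =>
    (measurable_pi_lambda _ (fun i => hOmeas N i)).comap_le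
  -- step 1: rewrite the integral via the conditional expectation
  have key : ∀ N : ℕ,
      (∫ ω, ∏ j ∈ Finset.range k, ((η N (Nat.floor (x * N) + j + 1) ω : ℝ)) ^ (p j) ∂ℙ)
        = ∫ ω, ∏ j ∈ Finset.range k,
            geomMoment (θL + (θR - θL) * Uord N (Nat.floor (x * N) + j + 1) ω) (p j) ∂ℙ := by
    intro N
    have hinj : Function.Injective (fun j : ℕ => Nat.floor (x * N) + j + 1) := by
      intro a b h
      have h' : Nat.floor (x * N) + a + 1 = Nat.floor (x * N) + b + 1 := h
      omega
    rw [← integral_condExp (hm N)]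
    exact integral_congr_ae (hcond N k (fun j => Nat.floor (x * N) + j + 1) p hinj)
  -- a.e. the uniforms are in [0,1]
  have hU01 : ∀ᵐ ω ∂ℙ, ∀ m : ℕ, U m ω ∈ Set.Icc (0:ℝ) 1 := by
    rw [ae_all_iff]
    intro m
    have hz : ℙ (U m ⁻¹' (Set.Icc (0:ℝ) 1)ᶜ) = 0 := by
      rw [← Measure.map_apply (hUmeas m) measurableSet_Icc.compl, hUlaw,
        Measure.restrict_apply measurableSet_Icc.compl]
      simp
    exact ae_iff.mpr hz
  -- eventual index bound
  have hidxk : ∀ᶠ N : ℕ in atTop, ∀ j, j < k → Nat.floor (x * N) + j + 1 ≤ N := by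
    filter_upwards [floor_add_le hx0.le hx1 k] with N hN j hj
    omega
  -- measurability of the conditional moments
  have hFmeas : ∀ N : ℕ, AEStronglyMeasurable
      (fun ω => ∏ j ∈ Finset.range k,
        geomMoment (θL + (θR - θL) * Uord N (Nat.floor (x * N) + j + 1) ω) (p j)) ℙ := by
    intro N
    have hinj : Function.Injective (fun j : ℕ => Nat.floor (x * N) + j + 1) := by
      intro a b h
      have h' : Nat.floor (x * N) + a + 1 = Nat.floor (x * N) + b + 1 := h
      omega
    exact ((stronglyMeasurable_condExp.mono (hm N)).aestronglyMeasurable).congr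
      (hcond N k (fun j => Nat.floor (x * N) + j + 1) p hinj)
  -- uniform bound
  have hbound : ∀ᶠ N : ℕ in atTop, ∀ᵐ ω ∂ℙ,
      ‖∏ j ∈ Finset.range k,
        geomMoment (θL + (θR - θL) * Uord N (Nat.floor (x * N) + j + 1) ω) (p j)‖
      ≤ ∏ j ∈ Finset.range k,
          ∑' l : ℕ, (l : ℝ) ^ (p j) * ((1 / (1 + θL)) * (θR / (1 + θR)) ^ l) := by
    filter_upwards [hidxk] with N hN
    filter_upwards [hU01] with ω hω
    have hθmem : ∀ j ∈ Finset.range k,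
        θL + (θR - θL) * Uord N (Nat.floor (x * N) + j + 1) ω ∈ Set.Icc θL θR := by
      intro j hj
      obtain ⟨σ, hbij, hσ⟩ := hperm N ω
      have hiI : (Nat.floor (x * N) + j + 1) ∈ Set.Icc 1 N :=
        ⟨by omega, hN j (Finset.mem_range.mp hj)⟩
      rw [hσ _ hiI]
      obtain ⟨h0, h1⟩ := hω (σ (Nat.floor (x * N) + j + 1))
      constructor <;> nlinarith
    rw [Real.norm_eq_abs, abs_of_nonneg (Finset.prod_nonneg fun j hj =>
      geomMoment_nonneg _ (le_trans hθL (hθmem j hj).1))]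
    exact Finset.prod_le_prod
      (fun j hj => geomMoment_nonneg _ (le_trans hθL (hθmem j hj).1))
      (fun j hj => geomMoment_le_bound hθL (hθmem j hj).1 (hθmem j hj).2 (p j))
  -- a.e. convergence
  have hlim : ∀ᵐ ω ∂ℙ, Tendsto
      (fun N : ℕ => ∏ j ∈ Finset.range k,
        geomMoment (θL + (θR - θL) * Uord N (Nat.floor (x * N) + j + 1) ω) (p j))
      atTop (nhds (∏ j ∈ Finset.range k, geomMoment ρ (p j))) := by
    filter_upwards [uord_tendsto_ae U hUmeas hUiid hUlaw Uord hmono hperm hx0 hx1, hU01]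
      with ω hω hω01
    apply tendsto_finset_prod
    intro j hj
    have hconv : Tendsto
        (fun N : ℕ => θL + (θR - θL) * Uord N (Nat.floor (x * N) + j + 1) ω)
        atTop (nhds ρ) := tendsto_const_nhds.add ((hω j).const_mul _)
    refine geomMoment_tendsto hθL ?_ hconv hρL hρR (p j)
    filter_upwards [floor_add_le hx0.le hx1 j] with N hN
    obtain ⟨σ, hbij, hσ⟩ := hperm N ω
    have hiI : (Nat.floor (x * N) + j + 1) ∈ Set.Icc 1 N := ⟨by omega, hN⟩
    rw [hσ _ hiI]
    obtain ⟨h0, h1⟩ := hω01 (σ (Nat.floor (x * N) + j + 1))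
    constructor <;> nlinarith
  -- dominated convergence
  have main := MeasureTheory.tendsto_integral_filter_of_dominated_convergence
    (μ := ℙ) (l := atTop)
    (F := fun N ω => ∏ j ∈ Finset.range k,
      geomMoment (θL + (θR - θL) * Uord N (Nat.floor (x * N) + j + 1) ω) (p j))
    (f := fun _ => ∏ j ∈ Finset.range k, geomMoment ρ (p j))
    (bound := fun _ => ∏ j ∈ Finset.range k,
      ∑' l : ℕ, (l : ℝ) ^ (p j) * ((1 / (1 + θL)) * (θR / (1 + θR)) ^ l))
    (Eventually.of_forall hFmeas) hbound (integrable_const _) hlim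
  rw [integral_const] at main
  simp only [measureReal_def, measure_univ, ENNReal.toReal_one, one_smul] at main
  have hrw : (fun N : ℕ =>
      ∫ ω, ∏ j ∈ Finset.range k, ((η N (Nat.floor (x * N) + j + 1) ω : ℝ)) ^ (p j) ∂ℙ)
      = fun N : ℕ => ∫ ω, ∏ j ∈ Finset.range k,
          geomMoment (θL + (θR - θL) * Uord N (Nat.floor (x * N) + j + 1) ω) (p j) ∂ℙ :=
    funext key
  rw [hrw]
  exact main
end
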